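/- Let p be an odd prime and G a finite p-group. Then for all i ≥ 1, η_i(G/η(G)^p) = η_i(G)/η(G)^p. -/

import Mathlib

/-- The subgroup generated by `p`-th powers of elements of `N`. -/
def pPow {G : Type*} [Group G] (p : ℕ) (N : Subgroup G) : Subgroup G :=
  Subgroup.closure ((fun x => x ^ p) '' (N : Set G))

theorem pPow_normal {G : Type*} [Group G] (p : ℕ) {N : Subgroup G} (hN : N.Normal) :
    (pPow p N).Normal := by
  constructor
  intro x hx g
  have h : pPow p N ≤ Subgroup.comap (MulAut.conj g).toMonoidHom (pPow p N) := by
    rw [pPow, Subgroup.closure_le]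
    rintro - ⟨n, hn, rfl⟩
    have : (MulAut.conj g) (n ^ p) = (g * n * g⁻¹) ^ p := by
      simp [MulAut.conj_apply, conj_pow]
    refine Subgroup.mem_comap.2 ?_
    show (MulAut.conj g) (n ^ p) ∈ _
    rw [this]
    exact Subgroup.subset_closure ⟨g * n * g⁻¹, hN.conj_mem n hn g, rfl⟩
  simpa using h hx

theorem normal_sSup {G : Type*} [Group G] {S : Set (Subgroup G)}
    (hS : ∀ N ∈ S, N.Normal) : (sSup S).Normal := by
  constructor
  intro x hx g
  have h : sSup S ≤ Subgroup.comap (MulAut.conj g).toMonoidHom (sSup S) := by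
    refine sSup_le fun N hN => le_trans ?_ (Subgroup.comap_mono (le_sSup hN))
    intro n hn
    exact Subgroup.mem_comap.2 (by simpa using (hS N hN).conj_mem n hn g)
  simpa using h hx

/-- The upper η-series: `η₀ = 1`, and `η_{i+1}/η_i = η(G/η_i)` is the product of all
powerfully embedded subgroups of `G/η_i`. -/
def etaUp (p : ℕ) (G : Type*) [Group G] : ℕ → Subgroup G
  | 0 => ⊥
  | i + 1 => sSup {N : Subgroup G | N.Normal ∧ ⁅N, (⊤ : Subgroup G)⁆ ≤ pPow p N ⊔ etaUp p G i}

instance etaUp_normal (p : ℕ) (G : Type*) [Group G] (i : ℕ) : (etaUp p G i).Normal := by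
  cases i with
  | zero => show (⊥ : Subgroup G).Normal; infer_instance
  | succ i => exact normal_sSup fun N hN => hN.1

/-- The powerful class of `G`. -/
noncomputable def pwc (p : ℕ) (G : Type*) [Group G] : ℕ := sInf {k | etaUp p G k = ⊤}

/-- Iterated commutator `[N, G, G, ..., G]` with `i` copies of `G`. -/
def itComm {G : Type*} [Group G] (N : Subgroup G) : ℕ → Subgroup G
  | 0 => N
  | i + 1 => ⁅itComm N i, (⊤ : Subgroup G)⁆

/-- `N` is PF-embedded in `G`: it admits a potent filtration. -/
def PFEmbedded {G : Type*} [Group G] (p : ℕ) (N : Subgroup G) : Prop :=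
  ∃ (s : ℕ) (M : ℕ → Subgroup G), M 0 = N ∧ M s = ⊥ ∧
    (∀ i, M (i + 1) ≤ M i) ∧ (∀ i, (M i).Normal) ∧
    (∀ i, ⁅M i, (⊤ : Subgroup G)⁆ ≤ M (i + 1)) ∧
    (∀ i, itComm (M i) (p - 1) ≤ pPow p (M (i + 1)))

instance instPPowEtaNormal (p : ℕ) (G : Type*) [Group G] : (pPow p (etaUp p G 1)).Normal :=
  pPow_normal p (etaUp_normal p G 1)

section Aux

variable {G : Type*} [Group G]

lemma pPow_mono (p : ℕ) {N M : Subgroup G} (h : N ≤ M) : pPow p N ≤ pPow p M :=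
  Subgroup.closure_mono (Set.image_mono h)

lemma map_pPow {H : Type*} [Group H] (f : G →* H) (p : ℕ) (N : Subgroup G) :
    Subgroup.map f (pPow p N) = pPow p (Subgroup.map f N) := by
  unfold pPow
  rw [MonoidHom.map_closure]
  congr 1
  ext x
  simp only [Set.mem_image, SetLike.mem_coe, Subgroup.mem_map]
  constructor
  · rintro ⟨y, ⟨n, hn, rfl⟩, rfl⟩
    exact ⟨f n, ⟨n, hn, rfl⟩, (map_pow f n p).symm⟩
  · rintro ⟨y, ⟨n, hn, rfl⟩, rfl⟩
    exact ⟨n ^ p, ⟨n, hn, rfl⟩, map_pow f n p⟩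

open scoped commutatorElement in
lemma commutator_sSup_top_le {S : Set (Subgroup G)} {X : Subgroup G} (hX : X.Normal)
    (h : ∀ N ∈ S, ⁅N, (⊤ : Subgroup G)⁆ ≤ X) : ⁅sSup S, (⊤ : Subgroup G)⁆ ≤ X := by
  rw [Subgroup.commutator_le]
  intro g hg t _
  rw [sSup_eq_iSup'] at hg
  refine Subgroup.iSup_induction (C := fun g => ∀ t : G, ⁅g, t⁆ ∈ X) _ hg ?_ ?_ ?_ t
  · rintro ⟨N, hN⟩ x hx u
    exact h N hN (Subgroup.commutator_mem_commutator hx (Subgroup.mem_top u))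
  · intro u
    have : ⁅(1 : G), u⁆ = 1 := by group
    rw [this]; exact X.one_mem
  · intro a b ha hb u
    have : ⁅a * b, u⁆ = a * ⁅b, u⁆ * a⁻¹ * ⁅a, u⁆ := by group
    rw [this]
    exact X.mul_mem (hX.conj_mem _ (hb u) a) (ha u)

lemma commutator_sup_top_le {A B X : Subgroup G} (hX : X.Normal)
    (hA : ⁅A, (⊤ : Subgroup G)⁆ ≤ X) (hB : ⁅B, (⊤ : Subgroup G)⁆ ≤ X) :
    ⁅A ⊔ B, (⊤ : Subgroup G)⁆ ≤ X := by
  have := commutator_sSup_top_le (S := {A, B}) hX (by rintro N (rfl | rfl) <;> assumption)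
  simpa [sSup_pair] using this

lemma etaUp_succ (p : ℕ) (G : Type*) [Group G] (i : ℕ) :
    etaUp p G (i + 1) =
      sSup {N : Subgroup G | N.Normal ∧ ⁅N, (⊤ : Subgroup G)⁆ ≤ pPow p N ⊔ etaUp p G i} :=
  rfl

lemma etaUp_comm_le (p : ℕ) (G : Type*) [Group G] (i : ℕ) :
    ⁅etaUp p G (i + 1), (⊤ : Subgroup G)⁆ ≤ pPow p (etaUp p G (i + 1)) ⊔ etaUp p G i := by
  haveI := pPow_normal p (etaUp_normal p G (i + 1))
  haveI := etaUp_normal p G i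
  have hX : (pPow p (etaUp p G (i + 1)) ⊔ etaUp p G i).Normal := Subgroup.sup_normal _ _
  rw [etaUp_succ]
  refine commutator_sSup_top_le hX ?_
  rintro N ⟨hNnorm, hNle⟩
  refine hNle.trans (sup_le_sup_right (pPow_mono p ?_) _)
  exact le_sSup ⟨hNnorm, hNle⟩

end Aux

lemma etaUp_quotient_aux {G : Type*} [Group G] (p : ℕ) (K : Subgroup G) [hKn : K.Normal]
    (hKle : K ≤ pPow p (etaUp p G 1)) (i : ℕ) :
    etaUp p (G ⧸ K) i = Subgroup.map (QuotientGroup.mk' K) (etaUp p G i) := by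
  have hπ : Function.Surjective (QuotientGroup.mk' K) := QuotientGroup.mk'_surjective K
  have hker : (QuotientGroup.mk' K).ker = K := QuotientGroup.ker_mk' K
  induction i with
  | zero =>
    show (⊥ : Subgroup (G ⧸ K)) = Subgroup.map (QuotientGroup.mk' K) ⊥
    rw [Subgroup.map_bot]
  | succ j ih =>
    apply le_antisymm
    · rw [etaUp_succ]
      refine sSup_le ?_
      rintro M' ⟨hnorm, hcomm⟩
      set M : Subgroup G := Subgroup.comap (QuotientGroup.mk' K) M' with hMdef
      have hmap : Subgroup.map (QuotientGroup.mk' K) M = M' :=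
        Subgroup.map_comap_eq_self_of_surjective hπ M'
      have hstep : Subgroup.map (QuotientGroup.mk' K) ⁅M, (⊤ : Subgroup G)⁆ ≤
          Subgroup.map (QuotientGroup.mk' K) (pPow p M ⊔ etaUp p G j) := by
        rw [Subgroup.map_commutator, hmap, Subgroup.map_top_of_surjective _ hπ,
          Subgroup.map_sup, map_pPow, hmap, ← ih]
        exact hcomm
      have h1 : ⁅M, (⊤ : Subgroup G)⁆ ≤ pPow p M ⊔ etaUp p G j ⊔ K := by
        have h1' : ⁅M, (⊤ : Subgroup G)⁆ ≤
            Subgroup.comap (QuotientGroup.mk' K)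
              (Subgroup.map (QuotientGroup.mk' K) (pPow p M ⊔ etaUp p G j)) :=
          le_trans (Subgroup.le_comap_map _ _) (Subgroup.comap_mono hstep)
        rwa [Subgroup.comap_map_eq, hker] at h1'
      set L : Subgroup G := M ⊔ etaUp p G 1 with hLdef
      haveI hMnorm : M.Normal := hnorm.comap (QuotientGroup.mk' K)
      haveI := etaUp_normal p G 1
      haveI hLnorm : L.Normal := Subgroup.sup_normal M (etaUp p G 1)
      haveI := pPow_normal p hLnorm
      haveI := etaUp_normal p G j
      have hXnorm : (pPow p L ⊔ etaUp p G j).Normal := Subgroup.sup_normal _ _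
      have hKle' : K ≤ pPow p L := hKle.trans (pPow_mono p le_sup_right)
      have hcommL : ⁅L, (⊤ : Subgroup G)⁆ ≤ pPow p L ⊔ etaUp p G j := by
        refine commutator_sup_top_le hXnorm ?_ ?_
        · refine h1.trans (sup_le (sup_le ?_ le_sup_right) (hKle'.trans le_sup_left))
          exact (pPow_mono p le_sup_left).trans le_sup_left
        · have h0 := etaUp_comm_le p G 0
          have hbot : etaUp p G 0 = ⊥ := rfl
          rw [hbot, sup_bot_eq] at h0
          exact h0.trans ((pPow_mono p le_sup_right).trans le_sup_left)
      have hML : M ≤ etaUp p G (j + 1) := by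
        rw [etaUp_succ]
        exact le_trans le_sup_left (le_sSup ⟨hLnorm, hcommL⟩)
      rw [← hmap]
      exact Subgroup.map_mono hML
    · have hmem : Subgroup.map (QuotientGroup.mk' K) (etaUp p G (j + 1)) ∈
          {N : Subgroup (G ⧸ K) | N.Normal ∧
            ⁅N, (⊤ : Subgroup (G ⧸ K))⁆ ≤ pPow p N ⊔ etaUp p (G ⧸ K) j} := by
        refine ⟨(etaUp_normal p G (j + 1)).map _ hπ, ?_⟩
        have h2 := Subgroup.map_mono (f := QuotientGroup.mk' K) (etaUp_comm_le p G j)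
        rw [Subgroup.map_commutator, Subgroup.map_top_of_surjective _ hπ,
          Subgroup.map_sup, map_pPow] at h2
        exact h2.trans (by rw [ih])
      rw [etaUp_succ]
      exact le_sSup hmem

/-- for all `i ≥ 1`, `η_i(G/η(G)^p) = η_i(G)/η(G)^p`. -/
theorem etaUp_quotient_pPow {p : ℕ} (hp : p.Prime) (hodd : Odd p)
    {G : Type*} [Group G] [Finite G] (hG : IsPGroup p G) (i : ℕ) (hi : 1 ≤ i) :
    etaUp p (G ⧸ pPow p (etaUp p G 1)) i =
      Subgroup.map (QuotientGroup.mk' (pPow p (etaUp p G 1))) (etaUp p G i) := by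
  exact etaUp_quotient_aux p (pPow p (etaUp p G 1)) le_rfl i
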